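/- arXiv:1609.03669 — 2 statements merged into one kernel-verified Lean document; each statement's English description precedes it below -/
import Mathlib

section
/- Let A, B be real symmetric n×n matrices with B negative semi-definite, and let λ > 0 be real. If k = k_r + i·k_i ∈ ℂ satisfies det(kA - iB - λI) = 0 and there exists a nonzero eigenvector, then k_r · k_i ≤ 0. -/
open Matrix

lemma herm_quad_real' {n : ℕ} (M : Matrix (Fin n) (Fin n) ℂ) (hM : M.IsHermitian)
    (v : Fin n → ℂ) : (star v ⬝ᵥ M.mulVec v).im = 0 := by
  rw [← Complex.conj_eq_iff_im]
  calc (starRingEnd ℂ) (star v ⬝ᵥ M *ᵥ v)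
      = star (star v ⬝ᵥ M *ᵥ v) := rfl
    _ = star (M *ᵥ v) ⬝ᵥ v := by rw [star_dotProduct, star_star]
    _ = (star v ᵥ* Mᴴ) ⬝ᵥ v := by rw [star_mulVec]
    _ = star v ⬝ᵥ M *ᵥ v := by rw [hM.eq, ← dotProduct_mulVec]

lemma map_isHermitian' {n : ℕ} (A : Matrix (Fin n) (Fin n) ℝ) (hA : A.IsSymm) :
    (A.map Complex.ofReal).IsHermitian := by
  ext i j
  simp [Matrix.conjTranspose_apply, ← hA.apply i j, Matrix.transpose_apply]

lemma quad_re_decomp' {n : ℕ} (B : Matrix (Fin n) (Fin n) ℝ) (v : Fin n → ℂ) :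
    (star v ⬝ᵥ (B.map Complex.ofReal).mulVec v).re =
    (fun i => (v i).re) ⬝ᵥ B.mulVec (fun i => (v i).re)
      + (fun i => (v i).im) ⬝ᵥ B.mulVec (fun i => (v i).im) := by
  simp only [dotProduct, mulVec, Matrix.map_apply, Finset.mul_sum, Complex.re_sum,
    ← Finset.sum_add_distrib]
  refine Finset.sum_congr rfl fun i _ => Finset.sum_congr rfl fun j _ => ?_
  simp [Complex.mul_re, Complex.mul_im]

theorem k_re_mul_k_im_nonpos
    (n : ℕ) (A B : Matrix (Fin n) (Fin n) ℝ)
    (hA : A.IsSymm) (hB : B.IsSymm)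
    (hBneg : ∀ v : Fin n → ℝ, v ⬝ᵥ B.mulVec v ≤ 0)
    (lam : ℝ) (hlam : 0 < lam) (k : ℂ)
    (hdet : (k • A.map (Complex.ofReal) - Complex.I • B.map (Complex.ofReal)
        - (lam : ℂ) • (1 : Matrix (Fin n) (Fin n) ℂ)).det = 0)
    (v : Fin n → ℂ) (hv : v ≠ 0)
    (hker : (k • A.map (Complex.ofReal) - Complex.I • B.map (Complex.ofReal)
        - (lam : ℂ) • (1 : Matrix (Fin n) (Fin n) ℂ)).mulVec v = 0) :
    k.re * k.im ≤ 0 := by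
  set A' := A.map Complex.ofReal with hA'
  set B' := B.map Complex.ofReal with hB'
  set a := star v ⬝ᵥ A'.mulVec v with ha
  set b := star v ⬝ᵥ B'.mulVec v with hb
  set c := star v ⬝ᵥ v with hc
  -- the scalar equation
  have heq : k * a - Complex.I * b - (lam : ℂ) * c = 0 := by
    have := congrArg (fun w => star v ⬝ᵥ w) hker
    simpa [sub_mulVec, smul_mulVec, dotProduct_sub, dotProduct_smul, one_mulVec,
      smul_eq_mul, ha, hb, hc] using this
  have haim : a.im = 0 := herm_quad_real' A' (map_isHermitian' A hA) v
  have hbim : b.im = 0 := herm_quad_real' B' (map_isHermitian' B hB) v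
  have hbre : b.re ≤ 0 := by
    rw [hb, hB', quad_re_decomp' B v]
    exact add_nonpos (hBneg _) (hBneg _)
  have hcim : c.im = 0 := by
    simp [hc, dotProduct, Complex.im_sum, Complex.mul_im]
    exact Finset.sum_eq_zero fun i _ => by ring
  have hcre : 0 < c.re := by
    have h0 : c.re = ∑ i, Complex.normSq (v i) := by
      simp [hc, dotProduct, Complex.re_sum, Complex.mul_re, Complex.normSq_apply]
    rw [h0]
    have hne : ∃ i, v i ≠ 0 := by
      by_contra h
      push_neg at h
      exact hv (funext h)
    obtain ⟨i, hi⟩ := hne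
    exact Finset.sum_pos' (fun j _ => Complex.normSq_nonneg _)
      ⟨i, Finset.mem_univ i, Complex.normSq_pos.2 hi⟩
  have hre := congrArg Complex.re heq
  have him := congrArg Complex.im heq
  simp [Complex.sub_re, Complex.sub_im, Complex.mul_re, Complex.mul_im, haim, hbim, hcim,
    Complex.I_re, Complex.I_im, Complex.ofReal_re, Complex.ofReal_im] at hre him
  -- hre : k.re * a.re - lam * c.re = 0 (roughly), him : k.im * a.re - b.re = 0
  have h1 : k.re * a.re = lam * c.re := by linarith
  have h2 : k.im * a.re = b.re := by linarith
  have ha2 : 0 < a.re * a.re := by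
    rcases eq_or_ne a.re 0 with h | h
    · rw [h, mul_zero] at h1
      exact absurd h1.symm (ne_of_gt (mul_pos hlam hcre))
    · exact mul_self_pos.2 h
  have h3 : k.re * k.im * (a.re * a.re) ≤ 0 := by
    have : (k.re * a.re) * (k.im * a.re) = (lam * c.re) * b.re := by rw [h1, h2]
    nlinarith [mul_nonpos_of_nonneg_of_nonpos (mul_pos hlam hcre).le hbre]
  nlinarith [ha2, h3]
end

section
/- Let A = P⁻¹SP and Q = P⁻¹NP where P is an invertible real matrix, S is real symmetric, and N is real symmetric negative semi-definite. Then for every real k, every root Ω of det(ΩI - kA + iQ) = 0 has non-negative imaginary part. -/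
open Matrix

lemma quad_re' (n : ℕ) (M : Matrix (Fin n) (Fin n) ℝ) (x : Fin n → ℂ) :
    (star x ⬝ᵥ (M.map Complex.ofReal) *ᵥ x).re
      = (fun i => (x i).re) ⬝ᵥ M *ᵥ (fun i => (x i).re)
      + (fun i => (x i).im) ⬝ᵥ M *ᵥ (fun i => (x i).im) := by
  simp only [dotProduct, mulVec, Pi.star_apply, map_apply, Complex.re_sum, Complex.im_sum,
    Complex.mul_re, Complex.mul_im, RCLike.star_def, Complex.conj_re, Complex.conj_im,
    Complex.ofReal_re, Complex.ofReal_im, Finset.mul_sum, Finset.sum_sub_distrib, zero_mul,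
    Finset.sum_add_distrib, neg_mul, sub_neg_eq_add]
  ring_nf

lemma quad_im' (n : ℕ) (M : Matrix (Fin n) (Fin n) ℝ) (hM : M.IsSymm) (x : Fin n → ℂ) :
    (star x ⬝ᵥ (M.map Complex.ofReal) *ᵥ x).im = 0 := by
  simp only [dotProduct, mulVec, Pi.star_apply, map_apply, Complex.re_sum, Complex.im_sum,
    Complex.mul_re, Complex.mul_im, RCLike.star_def, Complex.conj_re, Complex.conj_im,
    Complex.ofReal_re, Complex.ofReal_im, Finset.mul_sum, Finset.sum_sub_distrib, zero_mul,
    Finset.sum_add_distrib, neg_mul, sub_neg_eq_add, add_zero, zero_add, mul_zero, sub_zero]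
  have h2 : ∑ a : Fin n, ∑ b : Fin n, -((x a).im * (M a b * (x b).re))
      = -∑ a : Fin n, ∑ b : Fin n, (x a).re * (M a b * (x b).im) := by
    simp only [← Finset.sum_neg_distrib]
    rw [Finset.sum_comm]
    refine Finset.sum_congr rfl fun a _ => Finset.sum_congr rfl fun b _ => ?_
    have : M b a = M a b := hM.apply a b
    rw [this]; ring
  rw [h2, add_neg_cancel]

theorem dispersion_relation_roots_nonneg_im
    (N : ℕ) (P S Nm : Matrix (Fin N) (Fin N) ℝ)
    (hP : IsUnit P.det)
    (hS : S.IsSymm) (hN : Nm.IsSymm)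
    (hNneg : ∀ v : Fin N → ℝ, v ⬝ᵥ Nm.mulVec v ≤ 0)
    (A Q : Matrix (Fin N) (Fin N) ℝ)
    (hA : A = P⁻¹ * S * P) (hQ : Q = P⁻¹ * Nm * P)
    (k : ℝ) (Ω : ℂ)
    (hroot : (Ω • (1 : Matrix (Fin N) (Fin N) ℂ)
        - (k : ℂ) • A.map (Complex.ofReal)
        + Complex.I • Q.map (Complex.ofReal)).det = 0) :
    0 ≤ Ω.im := by
  obtain ⟨v, hv0, hveq⟩ := Matrix.exists_mulVec_eq_zero_iff.mpr hroot
  -- real matrix identities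
  have hPA : P * A = S * P := by
    rw [hA, ← Matrix.mul_assoc, ← Matrix.mul_assoc, Matrix.mul_nonsing_inv P hP, Matrix.one_mul]
  have hPQ : P * Q = Nm * P := by
    rw [hQ, ← Matrix.mul_assoc, ← Matrix.mul_assoc, Matrix.mul_nonsing_inv P hP, Matrix.one_mul]
  -- complexification
  set C : Matrix (Fin N) (Fin N) ℝ → Matrix (Fin N) (Fin N) ℂ :=
    fun M => M.map Complex.ofReal with hC
  have hCmul : ∀ M₁ M₂ : Matrix (Fin N) (Fin N) ℝ, C (M₁ * M₂) = C M₁ * C M₂ := by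
    intro M₁ M₂
    exact Matrix.map_mul (f := Complex.ofRealHom)
  have hPA' : C P * C A = C S * C P := by rw [← hCmul, ← hCmul, hPA]
  have hPQ' : C P * C Q = C Nm * C P := by rw [← hCmul, ← hCmul, hPQ]
  have hPdet : IsUnit (C P).det := by
    have := (Complex.ofRealHom).map_det P
    rw [hC]
    simp only
    rw [show (P.map Complex.ofReal).det = Complex.ofRealHom P.det from (Complex.ofRealHom.map_det P).symm]
    exact hP.map Complex.ofRealHom
  set w : Fin N → ℂ := C P *ᵥ v with hw
  have hw0 : w ≠ 0 := by
    intro h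
    apply hv0
    have : (C P)⁻¹ *ᵥ w = v := by
      rw [hw, Matrix.mulVec_mulVec, Matrix.nonsing_inv_mul _ hPdet, Matrix.one_mulVec]
    rw [← this, h, Matrix.mulVec_zero]
  -- the eigen-equation for w
  have hveq' : Ω • v - (k : ℂ) • (C A *ᵥ v) + Complex.I • (C Q *ᵥ v) = 0 := by
    have := hveq
    rwa [Matrix.add_mulVec, Matrix.sub_mulVec, Matrix.smul_mulVec,
      Matrix.smul_mulVec, Matrix.smul_mulVec, Matrix.one_mulVec] at this
  have key : Ω • w - (k : ℂ) • (C S *ᵥ w) + Complex.I • (C Nm *ᵥ w) = 0 := by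
    have := congrArg (fun u => C P *ᵥ u) hveq'
    simp only [Matrix.mulVec_add, Matrix.mulVec_sub, Matrix.mulVec_smul, Matrix.mulVec_zero] at this
    rwa [Matrix.mulVec_mulVec, Matrix.mulVec_mulVec, hPA', hPQ',
      ← Matrix.mulVec_mulVec, ← Matrix.mulVec_mulVec, ← hw] at this
  -- dot with star w
  have hdot := congrArg (fun u => star w ⬝ᵥ u) key
  simp only [dotProduct_add, dotProduct_sub, dotProduct_smul, dotProduct_zero,
    smul_eq_mul] at hdot
  set c : ℂ := star w ⬝ᵥ w with hc
  set s : ℂ := star w ⬝ᵥ (C S *ᵥ w) with hs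
  set nn : ℂ := star w ⬝ᵥ (C Nm *ᵥ w) with hnn
  -- imaginary parts
  have hsim : s.im = 0 := quad_im' N S hS w
  have hnnim : nn.im = 0 := quad_im' N Nm hN w
  have hnnre : nn.re ≤ 0 := by
    rw [hnn, hC]
    simp only
    rw [quad_re' N Nm w]
    have h1 := hNneg (fun i => (w i).re)
    have h2 := hNneg (fun i => (w i).im)
    linarith
  have hcim : c.im = 0 := by
    rw [hc]
    simp only [dotProduct, Pi.star_apply, Complex.im_sum, RCLike.star_def, Complex.mul_im,
      Complex.conj_re, Complex.conj_im]
    apply Finset.sum_eq_zero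
    intro i _
    ring
  have hcre : 0 < c.re := by
    have hcre' : c.re = ∑ i, Complex.normSq (w i) := by
      rw [hc]
      simp only [dotProduct, Pi.star_apply, Complex.re_sum, RCLike.star_def, Complex.mul_re,
        Complex.conj_re, Complex.conj_im, Complex.normSq_apply]
      refine Finset.sum_congr rfl fun i _ => by ring
    rw [hcre']
    obtain ⟨i, hi⟩ := Function.ne_iff.mp hw0
    refine Finset.sum_pos' (fun j _ => Complex.normSq_nonneg _) ⟨i, Finset.mem_univ i, ?_⟩
    exact Complex.normSq_pos.mpr hi
  -- take imaginary part of the equation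
  have him := congrArg Complex.im hdot
  simp only [Complex.add_im, Complex.sub_im, Complex.mul_im, Complex.I_re, Complex.I_im,
    Complex.ofReal_re, Complex.ofReal_im, Complex.zero_im, hcim, hsim, hnnim] at him
  -- him : Ω.im * c.re + Ω.re * 0 - (k * 0 + 0 * s.re) + (0 * 0 + 1 * nn.re) = 0
  nlinarith [him, hcre, hnnre]
end
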